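/- Let n ≥ 1 and let σ be a permutation of {1,…,n} with #(σ) = c cycles. Then there exist transpositions τ_1,…,τ_{c−1} in S_n such that σ∘τ_1∘…∘τ_{c−1} is a single cycle of length n (i.e. has exactly one cycle), |ℓ(σ∘τ_1∘…∘τ_{c−1}) − ℓ(σ)| ≤ 2(c−1), and |ℓ̄(σ∘τ_1∘…∘τ_{c−1}) − ℓ̄(σ)| ≤ 2(c−1). -/

import Mathlib

noncomputable section

/-- `s` is (the index set of) an increasing subsequence of `σ`. -/
def IncSeq {n : ℕ} (σ : Equiv.Perm (Fin n)) (s : Finset (Fin n)) : Prop :=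
  ∀ i ∈ s, ∀ j ∈ s, i < j → σ i < σ j

/-- `s` is (the index set of) a decreasing subsequence of `σ`. -/
def DecSeq {n : ℕ} (σ : Equiv.Perm (Fin n)) (s : Finset (Fin n)) : Prop :=
  ∀ i ∈ s, ∀ j ∈ s, i < j → σ j < σ i

/-- ℓ(σ): maximal cardinality of an increasing subsequence of `σ`. -/
def lis {n : ℕ} (σ : Equiv.Perm (Fin n)) : ℕ :=
  sSup {k | ∃ s : Finset (Fin n), IncSeq σ s ∧ s.card = k}

/-- ℓ̄(σ): maximal cardinality of a decreasing subsequence of `σ`. -/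
def lds {n : ℕ} (σ : Equiv.Perm (Fin n)) : ℕ :=
  sSup {k | ∃ s : Finset (Fin n), DecSeq σ s ∧ s.card = k}

/-- #(σ): number of cycles of `σ`, fixed points counted as cycles. -/
def numCycles {n : ℕ} (σ : Equiv.Perm (Fin n)) : ℕ :=
  σ.cycleType.card + (Finset.univ.filter fun x => σ x = x).card

namespace StmtAux

open Equiv Equiv.Perm List

variable {α : Type*} [DecidableEq α]

lemma formPerm_map (f : Equiv.Perm α) : ∀ (l : List α),
    formPerm (l.map f) = f * formPerm l * f⁻¹
  | [] => by simp
  | [x] => by simp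
  | (x :: y :: l) => by
    have ih := formPerm_map f (y :: l)
    simp only [List.map_cons] at ih ⊢
    rw [formPerm_cons_cons, formPerm_cons_cons, ih, Equiv.swap_apply_apply]
    group

lemma map_swap_eq_self {x e : α} {l : List α} (hx : x ∉ l) (he : e ∉ l) :
    l.map (Equiv.swap x e) = l := by
  have : ∀ a ∈ l, Equiv.swap x e a = id a := fun a ha =>
    Equiv.swap_apply_of_ne_of_ne (fun h => hx (h ▸ ha)) (fun h => he (h ▸ ha))
  rw [List.map_congr_left this, List.map_id]

lemma formPerm_head_swap {a b : α} {l : List α} (ha : a ∉ l) (hb : b ∉ l) :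
    formPerm (a :: l) = Equiv.swap a b * formPerm (b :: l) * Equiv.swap a b := by
  have h : (b :: l).map (Equiv.swap a b) = a :: l := by
    simp [map_swap_eq_self ha hb, Equiv.swap_apply_right]
  have := formPerm_map (Equiv.swap a b) (b :: l)
  rw [h] at this
  rw [this, Equiv.swap_inv]

lemma swap_commute_formPerm {x y : α} {l : List α} (hx : x ∉ l) (hy : y ∉ l) :
    Commute (Equiv.swap x y) (formPerm l) := by
  have := formPerm_map (Equiv.swap x y) l
  rw [map_swap_eq_self hx hy, Equiv.swap_inv] at this
  unfold Commute SemiconjBy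
  calc Equiv.swap x y * formPerm l
      = Equiv.swap x y * (Equiv.swap x y * formPerm l * Equiv.swap x y) := by rw [← this]
    _ = formPerm l * Equiv.swap x y := by
        rw [← mul_assoc, ← mul_assoc, Equiv.swap_mul_self, one_mul]

lemma swap_id3 {x y e : α} (hxy : x ≠ y) (hxe : x ≠ e) :
    Equiv.swap x e * Equiv.swap y e * Equiv.swap x y = Equiv.swap y e := by
  have h := Equiv.swap_apply_apply (Equiv.swap y e) x y
  rw [Equiv.swap_apply_of_ne_of_ne hxy hxe, Equiv.swap_apply_left, Equiv.swap_inv] at h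
  rw [h]
  simp [mul_assoc]

lemma formPerm_merge (l2 : List α) : ∀ (x y : α) (l1 : List α),
    Nodup (x :: l2 ++ y :: l1) →
    formPerm (x :: l2 ++ y :: l1)
      = formPerm (x :: l1) * formPerm (y :: l2) * Equiv.swap x y := by
  induction l2 with
  | nil =>
    intro x y l1 h
    simp only [List.cons_append, List.nil_append, formPerm_singleton, mul_one] at h ⊢
    have hx : x ∉ y :: l1 := (List.nodup_cons.mp h).1
    have hnd : (y :: l1).Nodup := (List.nodup_cons.mp h).2
    have hxl : x ∉ l1 := fun hm => hx (List.mem_cons_of_mem _ hm)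
    have hyl : y ∉ l1 := (List.nodup_cons.mp hnd).1
    rw [formPerm_cons_cons, formPerm_head_swap hyl hxl (b := x), Equiv.swap_comm y x,
      ← mul_assoc, ← mul_assoc, Equiv.swap_mul_self, one_mul]
  | cons e l2' ih =>
    intro x y l1 h
    simp only [List.cons_append] at h ⊢
    have hx : x ∉ e :: (l2' ++ y :: l1) := (List.nodup_cons.mp h).1
    have htail : (e :: (l2' ++ y :: l1)).Nodup := (List.nodup_cons.mp h).2
    have he : e ∉ l2' ++ y :: l1 := (List.nodup_cons.mp htail).1
    have htail2 : (l2' ++ y :: l1).Nodup := (List.nodup_cons.mp htail).2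
    simp only [List.mem_cons, List.mem_append, not_or] at hx he
    obtain ⟨hxe, hxl2, hxy, hxl1⟩ := hx
    obtain ⟨hel2, hey, hel1⟩ := he
    obtain ⟨hl2nd, hyl1nd, hdisj⟩ := List.nodup_append'.mp htail2
    have hyl2 : y ∉ l2' := fun hm => hdisj hm List.mem_cons_self
    have hyl1 : y ∉ l1 := (List.nodup_cons.mp hyl1nd).1
    have hl1nd : l1.Nodup := (List.nodup_cons.mp hyl1nd).2
    have key := ih e y l1 (by simpa using htail)
    simp only [List.cons_append] at key
    set F1 := formPerm (e :: l1) with hF1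
    set F2 := formPerm (e :: l2') with hF2
    have hconj1 : formPerm (x :: l1) = Equiv.swap x e * F1 * Equiv.swap x e :=
      formPerm_head_swap hxl1 hel1
    have hconj2 : formPerm (y :: l2') = Equiv.swap y e * F2 * Equiv.swap y e :=
      formPerm_head_swap hyl2 hel2
    have hcomm : Commute (Equiv.swap x y) F2 := by
      apply swap_commute_formPerm <;> simp [List.mem_cons, hxe, hxl2, hey, hyl2]
      · exact fun hm => (hey hm.symm).elim
    calc formPerm (x :: e :: (l2' ++ y :: l1))
        = Equiv.swap x e * formPerm (e :: (l2' ++ y :: l1)) := formPerm_cons_cons x e _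
      _ = Equiv.swap x e * (F1 * formPerm (y :: l2') * Equiv.swap e y) := by rw [key]
      _ = Equiv.swap x e * (F1 * (Equiv.swap y e * F2 * Equiv.swap y e) * Equiv.swap e y) := by
          rw [hconj2]
      _ = Equiv.swap x e * F1 * Equiv.swap y e * F2 := by
          rw [Equiv.swap_comm e y]
          simp [mul_assoc]
      _ = Equiv.swap x e * F1 * (Equiv.swap x e * Equiv.swap y e * Equiv.swap x y) * F2 := by
          rw [swap_id3 hxy hxe]
      _ = (Equiv.swap x e * F1 * Equiv.swap x e) * (Equiv.swap y e * F2) * Equiv.swap x y := by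
          simp only [mul_assoc, hcomm.eq]
      _ = formPerm (x :: l1) * formPerm (y :: e :: l2') * Equiv.swap x y := by
          rw [hconj1, formPerm_cons_cons y e l2']

lemma toList_eq_cons_tail [Fintype α] (σ : Equiv.Perm α) (x : α) (hx : x ∈ σ.support) :
    σ.toList x = x :: (σ.toList x).tail := by
  have hne : σ.toList x ≠ [] := by
    rw [Ne, toList_eq_nil_iff]; exact fun h => h hx
  have h0 := toList_getElem_zero (p := σ) (x := x) hx
  replace h0 : (σ.toList x).head hne = x := by rw [List.head_eq_getElem]; exact h0
  conv_lhs => rw [← List.cons_head_tail hne, h0]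

variable [Fintype α]

lemma formPerm_cons_tail_eq_cycleOf (σ : Equiv.Perm α) (x : α) :
    formPerm (x :: (σ.toList x).tail) = σ.cycleOf x := by
  by_cases hx : x ∈ σ.support
  · rw [← toList_eq_cons_tail σ x hx, formPerm_toList]
  · have : σ.toList x = [] := by rwa [toList_eq_nil_iff]
    rw [this]
    simp only [List.tail_nil, formPerm_singleton]
    rw [eq_comm, cycleOf_eq_one_iff]
    simpa using hx

lemma mem_tail_toList {σ : Equiv.Perm α} {x a : α} (h : a ∈ (σ.toList x).tail) :
    σ.SameCycle x a :=
  (mem_toList_iff.mp (List.mem_of_mem_tail h)).1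

-- main structural lemma
lemma key_count (σ : Equiv.Perm α) {x y : α} (hxy : x ≠ y) (hs : ¬σ.SameCycle x y) :
    (σ * Equiv.swap x y).cycleFactorsFinset.card
      + (Finset.univ.filter fun a => (σ * Equiv.swap x y) a = a).card + 1
    = σ.cycleFactorsFinset.card + (Finset.univ.filter fun a => σ a = a).card := by
  classical
  set tx := (σ.toList x).tail with htx
  set ty := (σ.toList y).tail with hty
  set c1 := σ.cycleOf x with hc1
  set c2 := σ.cycleOf y with hc2
  -- membership facts
  have hmtx : ∀ a ∈ tx, σ.SameCycle x a := fun a ha => mem_tail_toList ha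
  have hmty : ∀ a ∈ ty, σ.SameCycle y a := fun a ha => mem_tail_toList ha
  have hxtx : x ∉ tx := by
    by_cases hx : x ∈ σ.support
    · have := nodup_toList σ x
      rw [toList_eq_cons_tail σ x hx] at this
      exact (List.nodup_cons.mp this).1
    · have : σ.toList x = [] := by rwa [toList_eq_nil_iff]
      simp [htx, this]
  have hyty : y ∉ ty := by
    by_cases hy : y ∈ σ.support
    · have := nodup_toList σ y
      rw [toList_eq_cons_tail σ y hy] at this
      exact (List.nodup_cons.mp this).1
    · have : σ.toList y = [] := by rwa [toList_eq_nil_iff]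
      simp [hty, this]
  have hxty : x ∉ ty := fun h => hs ((hmty x h).symm)
  have hytx : y ∉ tx := fun h => hs (hmtx y h)
  have htxnd : tx.Nodup := (nodup_toList σ x).tail
  have htynd : ty.Nodup := (nodup_toList σ y).tail
  have hdisj : ty.Disjoint (y :: tx) := by
    intro a ha hb
    rcases List.mem_cons.mp hb with rfl | hb
    · exact hyty ha
    · exact hs ((hmtx a hb).trans (hmty a ha).symm)
  have hLnd : (x :: ty ++ y :: tx).Nodup := by
    simp only [List.cons_append, List.nodup_cons, List.mem_append, List.mem_cons,
      List.nodup_append, not_or]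
    exact ⟨⟨hxty, hxy, hxtx⟩, htynd, ⟨hytx, htxnd⟩, fun a ha b hb hab => hdisj ha (by subst hab; exact List.mem_cons.mpr hb)⟩
  set L := x :: ty ++ y :: tx with hL
  set C := formPerm L with hCdef
  have hLlen : 2 ≤ L.length := by simp [hL]; omega
  have hC : C.IsCycle := List.isCycle_formPerm hLnd hLlen
  have hCsupp : ∀ a, C a ≠ a → σ.SameCycle x a ∨ σ.SameCycle y a := by
    intro a ha
    have hmem : a ∈ L := by
      have := List.support_formPerm_le' (l := L) (show a ∈ {b | formPerm L b ≠ b} from ha)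
      simpa using this
    simp only [hL, List.cons_append, List.mem_cons, List.mem_append] at hmem
    rcases hmem with rfl | hmem
    · exact Or.inl (SameCycle.refl _ _)
    rcases hmem with hmem | hmem
    · exact Or.inr (hmty a hmem)
    rcases hmem with rfl | hmem
    · exact Or.inr (SameCycle.refl _ _)
    · exact Or.inl (hmtx a hmem)
  have happ1 : ∀ a, σ.SameCycle x a → c1 a = σ a := fun a ha => by
    rw [hc1, cycleOf_apply, if_pos ha]
  have happ1' : ∀ a, ¬σ.SameCycle x a → c1 a = a := fun a ha => by
    rw [hc1, cycleOf_apply, if_neg ha]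
  have happ2 : ∀ a, σ.SameCycle y a → c2 a = σ a := fun a ha => by
    rw [hc2, cycleOf_apply, if_pos ha]
  have happ2' : ∀ a, ¬σ.SameCycle y a → c2 a = a := fun a ha => by
    rw [hc2, cycleOf_apply, if_neg ha]
  set d := c1⁻¹ * c2⁻¹ * σ with hddef
  have hfix_d : ∀ a, σ.SameCycle x a ∨ σ.SameCycle y a → d a = a := by
    intro a h
    rcases h with ha | ha
    · have h2 : c2⁻¹ (σ a) = σ a := by
        rw [Perm.inv_eq_iff_eq]
        exact (happ2' (σ a) fun hc => hs (ha.trans (sameCycle_apply_right.mp hc).symm)).symm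
      have h1 : c1⁻¹ (σ a) = a := by
        rw [Perm.inv_eq_iff_eq]
        exact (happ1 a ha).symm
      show c1⁻¹ (c2⁻¹ (σ a)) = a
      rw [h2, h1]
    · have h2 : c2⁻¹ (σ a) = a := by
        rw [Perm.inv_eq_iff_eq]
        exact (happ2 a ha).symm
      have h1 : c1⁻¹ a = a := by
        rw [Perm.inv_eq_iff_eq]
        exact (happ1' a fun hc => hs (hc.trans ha.symm)).symm
      show c1⁻¹ (c2⁻¹ (σ a)) = a
      rw [h2, h1]
  have hdisj12 : c1.Disjoint c2 := by
    intro a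
    by_cases ha : σ.SameCycle x a
    · exact Or.inr (happ2' a fun hc => hs (ha.trans hc.symm))
    · exact Or.inl (happ1' a ha)
  have hcomm12 : Commute c1 c2 := hdisj12.commute
  have hσ_eq : σ = c1 * c2 * d := by
    rw [hddef]
    have h21 : c2 * c1⁻¹ = c1⁻¹ * c2 := (hcomm12.symm.inv_right).eq
    calc σ = c1 * (c1⁻¹ * c2) * (c2⁻¹ * σ) := by
            simp [mul_assoc]
      _ = c1 * (c2 * c1⁻¹) * (c2⁻¹ * σ) := by rw [h21]
      _ = c1 * c2 * (c1⁻¹ * (c2⁻¹ * σ)) := by simp [mul_assoc]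
      _ = c1 * c2 * (c1⁻¹ * c2⁻¹ * σ) := by simp [mul_assoc]
  have hswapd : (Equiv.swap x y).Disjoint d := by
    intro a
    by_cases ha : a = x ∨ a = y
    · refine Or.inr (hfix_d a ?_)
      rcases ha with rfl | rfl
      · exact Or.inl (SameCycle.refl _ _)
      · exact Or.inr (SameCycle.refl _ _)
    · push_neg at ha
      exact Or.inl (Equiv.swap_apply_of_ne_of_ne ha.1 ha.2)
  have hCd_disj : C.Disjoint d := by
    intro a
    by_cases hCa : C a = a
    · exact Or.inl hCa
    · exact Or.inr (hfix_d a (hCsupp a hCa))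
  have hCeq : c1 * c2 * Equiv.swap x y = C := by
    rw [hCdef, hL, formPerm_merge ty x y tx hLnd,
      formPerm_cons_tail_eq_cycleOf, formPerm_cons_tail_eq_cycleOf]
  have hmain : σ * Equiv.swap x y = C * d := by
    calc σ * Equiv.swap x y = c1 * c2 * d * Equiv.swap x y := by rw [← hσ_eq]
      _ = c1 * c2 * (d * Equiv.swap x y) := by rw [mul_assoc]
      _ = c1 * c2 * (Equiv.swap x y * d) := by rw [hswapd.commute.eq]
      _ = c1 * c2 * Equiv.swap x y * d := by simp [mul_assoc]
      _ = C * d := by rw [hCeq]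
  -- cycle factors count
  have hfac : (σ * Equiv.swap x y).cycleFactorsFinset = {C} ∪ d.cycleFactorsFinset := by
    rw [hmain, hCd_disj.cycleFactorsFinset_mul_eq_union,
      hC.cycleFactorsFinset_eq_singleton]
  have hfac_card : (σ * Equiv.swap x y).cycleFactorsFinset.card
      = 1 + d.cycleFactorsFinset.card := by
    rw [hfac, Finset.card_union_of_disjoint, Finset.card_singleton]
    have := hCd_disj.disjoint_cycleFactorsFinset
    rwa [hC.cycleFactorsFinset_eq_singleton] at this
  -- fixed points
  have hσyx : σ y ≠ x := fun h => hs ⟨-1, by simp [← h]⟩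
  have hσxy : σ x ≠ y := fun h => hs ⟨1, by simp [h]⟩
  have hfixiff : ∀ a, (σ * Equiv.swap x y) a = a ↔ (σ a = a ∧ a ≠ x ∧ a ≠ y) := by
    intro a
    by_cases hax : a = x
    · subst hax
      simp only [Perm.mul_apply, Equiv.swap_apply_left]
      exact ⟨fun h => absurd h hσyx, fun h => absurd rfl h.2.1⟩
    by_cases hay : a = y
    · subst hay
      simp only [Perm.mul_apply, Equiv.swap_apply_right]
      exact ⟨fun h => absurd h hσxy, fun h => absurd rfl h.2.2⟩
    · simp only [Perm.mul_apply, Equiv.swap_apply_of_ne_of_ne hax hay]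
      tauto
  have hfilter : (Finset.univ.filter fun a => (σ * Equiv.swap x y) a = a)
      = (Finset.univ.filter fun a => σ a = a) \ {x, y} := by
    ext a
    simp only [Finset.mem_filter, Finset.mem_sdiff, Finset.mem_univ, true_and,
      Finset.mem_insert, Finset.mem_singleton, not_or, hfixiff a]
  set F := Finset.univ.filter fun a => σ a = a with hF
  have hfix_card : (Finset.univ.filter fun a => (σ * Equiv.swap x y) a = a).card
      + (F ∩ {x, y}).card = F.card := by
    rw [hfilter, Finset.card_sdiff_add_card_inter]
  have hcommσ1 : Commute σ c1 := by
    apply Equiv.ext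
    intro a
    simp only [Perm.mul_apply]
    by_cases ha : σ.SameCycle x a
    · rw [happ1 a ha, happ1 (σ a) (sameCycle_apply_right.mpr ha)]
    · rw [happ1' a ha, happ1' (σ a) (fun hc => ha (sameCycle_apply_right.mp hc))]
  have hcommσ2 : Commute σ c2 := by
    apply Equiv.ext
    intro a
    simp only [Perm.mul_apply]
    by_cases ha : σ.SameCycle y a
    · rw [happ2 a ha, happ2 (σ a) (sameCycle_apply_right.mpr ha)]
    · rw [happ2' a ha, happ2' (σ a) (fun hc => ha (sameCycle_apply_right.mp hc))]
  have h12inv : Commute c1⁻¹ c2⁻¹ := (hcomm12.inv_left).inv_right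
  have hd2 : d = σ * c2⁻¹ * c1⁻¹ := by
    calc d = c1⁻¹ * c2⁻¹ * σ := hddef
      _ = c1⁻¹ * (c2⁻¹ * σ) := by rw [mul_assoc]
      _ = c1⁻¹ * (σ * c2⁻¹) := by rw [hcommσ2.inv_right.eq]
      _ = c1⁻¹ * σ * c2⁻¹ := by rw [mul_assoc]
      _ = σ * c1⁻¹ * c2⁻¹ := by rw [hcommσ1.inv_right.eq]
      _ = σ * (c1⁻¹ * c2⁻¹) := by rw [mul_assoc]
      _ = σ * (c2⁻¹ * c1⁻¹) := by rw [h12inv.eq]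
      _ = σ * c2⁻¹ * c1⁻¹ := by rw [mul_assoc]
  set S := σ.cycleFactorsFinset with hS
  by_cases hx0 : σ x = x <;> by_cases hy0 : σ y = y
  · -- both fixed
    have hc1one : c1 = 1 := (cycleOf_eq_one_iff σ).mpr hx0
    have hc2one : c2 = 1 := (cycleOf_eq_one_iff σ).mpr hy0
    have hdσ : d = σ := by rw [hd2, hc1one, hc2one]; simp
    have hinter : F ∩ {x, y} = {x, y} := by
      ext a
      simp only [hF, Finset.mem_inter, Finset.mem_filter, Finset.mem_univ, true_and,
        Finset.mem_insert, Finset.mem_singleton]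
      constructor
      · exact fun h => h.2
      · rintro (rfl | rfl)
        · exact ⟨hx0, Or.inl rfl⟩
        · exact ⟨hy0, Or.inr rfl⟩
    have hintercard : (F ∩ {x, y}).card = 2 := by
      rw [hinter, Finset.card_insert_of_notMem (by simpa using hxy), Finset.card_singleton]
    have hfdcard : d.cycleFactorsFinset.card = S.card := by rw [hdσ]
    omega
  · -- x fixed, y moved
    have hc1one : c1 = 1 := (cycleOf_eq_one_iff σ).mpr hx0
    have hc2S : c2 ∈ S := cycleOf_mem_cycleFactorsFinset_iff.mpr (mem_support.mpr hy0)
    have hdeq : d = σ * c2⁻¹ := by rw [hd2, hc1one]; simp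
    have hfd : d.cycleFactorsFinset = S.erase c2 := by
      rw [hdeq, cycleFactorsFinset_mul_inv_mem_eq_sdiff hc2S, Finset.sdiff_singleton_eq_erase]
    have hfdcard : d.cycleFactorsFinset.card = S.card - 1 := by
      rw [hfd, Finset.card_erase_of_mem hc2S]
    have hSpos : 1 ≤ S.card := Finset.card_pos.mpr ⟨c2, hc2S⟩
    have hinter : F ∩ {x, y} = {x} := by
      ext a
      simp only [hF, Finset.mem_inter, Finset.mem_filter, Finset.mem_univ, true_and,
        Finset.mem_insert, Finset.mem_singleton]
      constructor
      · rintro ⟨hfa, rfl | rfl⟩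
        · rfl
        · exact absurd hfa hy0
      · rintro rfl; exact ⟨hx0, Or.inl rfl⟩
    have hintercard : (F ∩ {x, y}).card = 1 := by rw [hinter, Finset.card_singleton]
    omega
  · -- x moved, y fixed
    have hc2one : c2 = 1 := (cycleOf_eq_one_iff σ).mpr hy0
    have hc1S : c1 ∈ S := cycleOf_mem_cycleFactorsFinset_iff.mpr (mem_support.mpr hx0)
    have hdeq : d = σ * c1⁻¹ := by rw [hd2, hc2one]; simp
    have hfd : d.cycleFactorsFinset = S.erase c1 := by
      rw [hdeq, cycleFactorsFinset_mul_inv_mem_eq_sdiff hc1S, Finset.sdiff_singleton_eq_erase]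
    have hfdcard : d.cycleFactorsFinset.card = S.card - 1 := by
      rw [hfd, Finset.card_erase_of_mem hc1S]
    have hSpos : 1 ≤ S.card := Finset.card_pos.mpr ⟨c1, hc1S⟩
    have hinter : F ∩ {x, y} = {y} := by
      ext a
      simp only [hF, Finset.mem_inter, Finset.mem_filter, Finset.mem_univ, true_and,
        Finset.mem_insert, Finset.mem_singleton]
      constructor
      · rintro ⟨hfa, rfl | rfl⟩
        · exact absurd hfa hx0
        · rfl
      · rintro rfl; exact ⟨hy0, Or.inr rfl⟩
    have hintercard : (F ∩ {x, y}).card = 1 := by rw [hinter, Finset.card_singleton]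
    omega
  · -- both moved
    have hc1S : c1 ∈ S := cycleOf_mem_cycleFactorsFinset_iff.mpr (mem_support.mpr hx0)
    have hc2S : c2 ∈ S := cycleOf_mem_cycleFactorsFinset_iff.mpr (mem_support.mpr hy0)
    have hne12 : c1 ≠ c2 := by
      intro h
      have hx1 : x ∈ c1.support :=
        mem_support_cycleOf_iff.mpr ⟨SameCycle.refl _ _, mem_support.mpr hx0⟩
      rw [h] at hx1
      exact hs ((mem_support_cycleOf_iff.mp hx1).1.symm)
    have hc1mem : c1 ∈ (σ * c2⁻¹).cycleFactorsFinset := by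
      rw [cycleFactorsFinset_mul_inv_mem_eq_sdiff hc2S, Finset.mem_sdiff]
      exact ⟨hc1S, by simpa using hne12⟩
    have hfd : d.cycleFactorsFinset = (S.erase c2).erase c1 := by
      rw [hd2, cycleFactorsFinset_mul_inv_mem_eq_sdiff hc1mem,
        cycleFactorsFinset_mul_inv_mem_eq_sdiff hc2S, Finset.sdiff_singleton_eq_erase,
        Finset.sdiff_singleton_eq_erase]
    have hmem' : c1 ∈ S.erase c2 := Finset.mem_erase.mpr ⟨hne12, hc1S⟩
    have h1 : (S.erase c2).card = S.card - 1 := Finset.card_erase_of_mem hc2S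
    have h2 : ((S.erase c2).erase c1).card = (S.erase c2).card - 1 :=
      Finset.card_erase_of_mem hmem'
    have hpos1 : 1 ≤ S.card := Finset.card_pos.mpr ⟨c2, hc2S⟩
    have hpos2 : 1 ≤ (S.erase c2).card := Finset.card_pos.mpr ⟨c1, hmem'⟩
    have hfdcard : d.cycleFactorsFinset.card = (S.erase c2).card - 1 := by rw [hfd, h2]
    have hinter : F ∩ {x, y} = ∅ := by
      ext a
      simp only [hF, Finset.mem_inter, Finset.mem_filter, Finset.mem_univ, true_and,
        Finset.mem_insert, Finset.mem_singleton, Finset.notMem_empty, iff_false, not_and, not_or]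
      intro hfa
      exact ⟨fun h => hx0 (h ▸ hfa), fun h => hy0 (h ▸ hfa)⟩
    have hintercard : (F ∩ {x, y}).card = 0 := by rw [hinter, Finset.card_empty]
    omega

lemma card_cycleType_eq (σ : Equiv.Perm α) :
    Multiset.card σ.cycleType = σ.cycleFactorsFinset.card := by
  rw [cycleType_def, Multiset.card_map]
  rfl

lemma exists_not_sameCycle (σ : Equiv.Perm α)
    (h : 2 ≤ σ.cycleFactorsFinset.card + (Finset.univ.filter fun a => σ a = a).card) :
    ∃ x y : α, x ≠ y ∧ ¬σ.SameCycle x y := by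
  by_contra hc
  push_neg at hc
  have hall : ∀ x y : α, x ≠ y → σ.SameCycle x y := hc
  by_cases h1 : σ = 1
  · subst h1
    have hsub : ∀ x y : α, x = y := by
      intro x y
      by_contra hne
      exact hne (sameCycle_one.mp (hall x y hne))
    have hcard : Equiv.Perm.cycleFactorsFinset (1 : Equiv.Perm α) = ∅ :=
      cycleFactorsFinset_one
    have hfix : (Finset.univ.filter fun a => (1 : Equiv.Perm α) a = a).card ≤ 1 := by
      have : Fintype.card α ≤ 1 := Fintype.card_le_one_iff.mpr hsub
      calc (Finset.univ.filter fun a => (1 : Equiv.Perm α) a = a).card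
          ≤ Finset.univ.card := Finset.card_filter_le _ _
        _ ≤ 1 := by rwa [Finset.card_univ]
    rw [hcard] at h
    simp only [Finset.card_empty, zero_add] at h
    omega
  · obtain ⟨x, hx⟩ : ∃ x, σ x ≠ x := by
      by_contra hall1
      push_neg at hall1
      exact h1 (Equiv.ext hall1)
    have hcyc : σ.IsCycle := by
      refine ⟨x, hx, fun b hb => ?_⟩
      by_cases hbx : x = b
      · exact hbx ▸ SameCycle.refl _ _
      · exact hall x b hbx
    have hfac : σ.cycleFactorsFinset = {σ} := hcyc.cycleFactorsFinset_eq_singleton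
    have hfix : (Finset.univ.filter fun a => σ a = a) = ∅ := by
      rw [Finset.filter_eq_empty_iff]
      intro a _
      intro ha
      by_cases hax : x = a
      · exact hx (hax ▸ ha)
      · exact hx ((hall x a hax).eq_of_right ha ▸ ha)
    rw [hfac, hfix] at h
    simp at h

end StmtAux

section LisLds

open StmtAux

lemma lis_nonempty {n : ℕ} (σ : Equiv.Perm (Fin n)) :
    {k | ∃ s : Finset (Fin n), IncSeq σ s ∧ s.card = k}.Nonempty :=
  ⟨0, ⟨∅, fun i hi => absurd hi (Finset.notMem_empty i), Finset.card_empty⟩⟩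

lemma lis_bdd {n : ℕ} (σ : Equiv.Perm (Fin n)) :
    BddAbove {k | ∃ s : Finset (Fin n), IncSeq σ s ∧ s.card = k} := by
  refine ⟨n, ?_⟩
  rintro k ⟨s, -, rfl⟩
  simpa using Finset.card_le_univ s

lemma lds_nonempty {n : ℕ} (σ : Equiv.Perm (Fin n)) :
    {k | ∃ s : Finset (Fin n), DecSeq σ s ∧ s.card = k}.Nonempty :=
  ⟨0, ⟨∅, fun i hi => absurd hi (Finset.notMem_empty i), Finset.card_empty⟩⟩

lemma lds_bdd {n : ℕ} (σ : Equiv.Perm (Fin n)) :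
    BddAbove {k | ∃ s : Finset (Fin n), DecSeq σ s ∧ s.card = k} := by
  refine ⟨n, ?_⟩
  rintro k ⟨s, -, rfl⟩
  simpa using Finset.card_le_univ s

lemma lis_le_of_agree {n : ℕ} (σ π : Equiv.Perm (Fin n)) (x y : Fin n)
    (h : ∀ a, a ≠ x → a ≠ y → π a = σ a) : lis σ ≤ lis π + 2 := by
  apply csSup_le (lis_nonempty σ)
  rintro k ⟨s, hss, rfl⟩
  set t := (s.erase x).erase y with ht
  have htinc : IncSeq π t := by
    intro i hi j hj hij
    obtain ⟨hiy, hix, his⟩ : i ≠ y ∧ i ≠ x ∧ i ∈ s := by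
      have h1 := Finset.mem_erase.mp hi
      have h2 := Finset.mem_erase.mp h1.2
      exact ⟨h1.1, h2.1, h2.2⟩
    obtain ⟨hjy, hjx, hjs⟩ : j ≠ y ∧ j ≠ x ∧ j ∈ s := by
      have h1 := Finset.mem_erase.mp hj
      have h2 := Finset.mem_erase.mp h1.2
      exact ⟨h1.1, h2.1, h2.2⟩
    rw [h i hix hiy, h j hjx hjy]
    exact hss i his j hjs hij
  have h1 : t.card ≤ lis π := le_csSup (lis_bdd π) ⟨t, htinc, rfl⟩
  have h2 : s.card - 1 ≤ (s.erase x).card := Finset.pred_card_le_card_erase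
  have h3 : (s.erase x).card - 1 ≤ t.card := Finset.pred_card_le_card_erase
  omega

lemma lds_le_of_agree {n : ℕ} (σ π : Equiv.Perm (Fin n)) (x y : Fin n)
    (h : ∀ a, a ≠ x → a ≠ y → π a = σ a) : lds σ ≤ lds π + 2 := by
  apply csSup_le (lds_nonempty σ)
  rintro k ⟨s, hss, rfl⟩
  set t := (s.erase x).erase y with ht
  have htinc : DecSeq π t := by
    intro i hi j hj hij
    obtain ⟨hiy, hix, his⟩ : i ≠ y ∧ i ≠ x ∧ i ∈ s := by
      have h1 := Finset.mem_erase.mp hi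
      have h2 := Finset.mem_erase.mp h1.2
      exact ⟨h1.1, h2.1, h2.2⟩
    obtain ⟨hjy, hjx, hjs⟩ : j ≠ y ∧ j ≠ x ∧ j ∈ s := by
      have h1 := Finset.mem_erase.mp hj
      have h2 := Finset.mem_erase.mp h1.2
      exact ⟨h1.1, h2.1, h2.2⟩
    rw [h i hix hiy, h j hjx hjy]
    exact hss i his j hjs hij
  have h1 : t.card ≤ lds π := le_csSup (lds_bdd π) ⟨t, htinc, rfl⟩
  have h2 : s.card - 1 ≤ (s.erase x).card := Finset.pred_card_le_card_erase
  have h3 : (s.erase x).card - 1 ≤ t.card := Finset.pred_card_le_card_erase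
  omega

lemma abs_lis_swap_le {n : ℕ} (σ : Equiv.Perm (Fin n)) (x y : Fin n) :
    |(lis (σ * Equiv.swap x y) : ℤ) - (lis σ : ℤ)| ≤ 2 := by
  have hagree : ∀ a : Fin n, a ≠ x → a ≠ y → (σ * Equiv.swap x y) a = σ a := by
    intro a hax hay
    simp [Equiv.Perm.mul_apply, Equiv.swap_apply_of_ne_of_ne hax hay]
  have hagree' : ∀ a : Fin n, a ≠ x → a ≠ y → σ a = (σ * Equiv.swap x y) a :=
    fun a hax hay => (hagree a hax hay).symm
  have h1 := lis_le_of_agree σ (σ * Equiv.swap x y) x y hagree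
  have h2 := lis_le_of_agree (σ * Equiv.swap x y) σ x y hagree'
  rw [abs_le]
  omega

lemma abs_lds_swap_le {n : ℕ} (σ : Equiv.Perm (Fin n)) (x y : Fin n) :
    |(lds (σ * Equiv.swap x y) : ℤ) - (lds σ : ℤ)| ≤ 2 := by
  have hagree : ∀ a : Fin n, a ≠ x → a ≠ y → (σ * Equiv.swap x y) a = σ a := by
    intro a hax hay
    simp [Equiv.Perm.mul_apply, Equiv.swap_apply_of_ne_of_ne hax hay]
  have hagree' : ∀ a : Fin n, a ≠ x → a ≠ y → σ a = (σ * Equiv.swap x y) a :=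
    fun a hax hay => (hagree a hax hay).symm
  have h1 := lds_le_of_agree σ (σ * Equiv.swap x y) x y hagree
  have h2 := lds_le_of_agree (σ * Equiv.swap x y) σ x y hagree'
  rw [abs_le]
  omega

end LisLds

section Main

open StmtAux Equiv

lemma numCycles_eq {n : ℕ} (σ : Equiv.Perm (Fin n)) :
    numCycles σ = σ.cycleFactorsFinset.card
      + (Finset.univ.filter fun x => σ x = x).card := by
  rw [numCycles, card_cycleType_eq]

lemma numCycles_swap_step {n : ℕ} (σ : Equiv.Perm (Fin n)) {x y : Fin n}
    (hxy : x ≠ y) (hs : ¬σ.SameCycle x y) :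
    numCycles (σ * Equiv.swap x y) + 1 = numCycles σ := by
  rw [numCycles_eq, numCycles_eq]
  exact key_count σ hxy hs

lemma one_le_numCycles {n : ℕ} (hn : 1 ≤ n) (σ : Equiv.Perm (Fin n)) :
    1 ≤ numCycles σ := by
  rw [numCycles_eq]
  by_cases h1 : σ = 1
  · subst h1
    have : (Finset.univ.filter fun x => (1 : Equiv.Perm (Fin n)) x = x) = Finset.univ := by
      apply Finset.filter_true_of_mem
      intro a _
      rfl
    rw [this, Finset.card_univ, Fintype.card_fin]
    omega
  · have : σ.cycleFactorsFinset ≠ ∅ := fun hc =>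
      h1 (Equiv.Perm.cycleFactorsFinset_eq_empty_iff.mp hc)
    have := Finset.card_pos.mpr (Finset.nonempty_of_ne_empty this)
    omega

lemma main_aux {n : ℕ} : ∀ (c : ℕ) (σ : Equiv.Perm (Fin n)), numCycles σ = c + 1 →
    ∃ τs : List (Equiv.Perm (Fin n)), τs.length = c ∧ (∀ τ ∈ τs, τ.IsSwap) ∧
      numCycles (σ * τs.prod) = 1 ∧
      |(lis (σ * τs.prod) : ℤ) - (lis σ : ℤ)| ≤ 2 * c ∧
      |(lds (σ * τs.prod) : ℤ) - (lds σ : ℤ)| ≤ 2 * c := by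
  intro c
  induction c with
  | zero =>
    intro σ h
    refine ⟨[], rfl, by simp, ?_, by simp, by simp⟩
    rw [List.prod_nil, mul_one]
    omega
  | succ c ih =>
    intro σ h
    obtain ⟨x, y, hxy, hs⟩ : ∃ x y : Fin n, x ≠ y ∧ ¬σ.SameCycle x y := by
      apply exists_not_sameCycle
      rw [numCycles_eq] at h
      omega
    have hstep : numCycles (σ * Equiv.swap x y) + 1 = numCycles σ :=
      numCycles_swap_step σ hxy hs
    set σ' := σ * Equiv.swap x y with hσ'
    have h' : numCycles σ' = c + 1 := by omega
    obtain ⟨τs, hlen, hswaps, hone, hlis, hlds⟩ := ih σ' h'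
    have hprod : σ * (Equiv.swap x y :: τs).prod = σ' * τs.prod := by
      rw [List.prod_cons, ← mul_assoc]
    refine ⟨Equiv.swap x y :: τs, by simp [hlen], ?_, ?_, ?_, ?_⟩
    · intro τ hτ
      rcases List.mem_cons.mp hτ with rfl | hτ
      · exact ⟨x, y, hxy, rfl⟩
      · exact hswaps τ hτ
    · rwa [hprod]
    · rw [hprod]
      have t1 := abs_lis_swap_le σ x y
      calc |(lis (σ' * τs.prod) : ℤ) - (lis σ : ℤ)|
          ≤ |(lis (σ' * τs.prod) : ℤ) - (lis σ' : ℤ)| + |(lis σ' : ℤ) - (lis σ : ℤ)| :=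
            abs_sub_le _ _ _
        _ ≤ 2 * c + 2 := by
            rw [← hσ'] at t1
            omega
        _ ≤ 2 * (c + 1 : ℕ) := by push_cast; omega
    · rw [hprod]
      have t1 := abs_lds_swap_le σ x y
      calc |(lds (σ' * τs.prod) : ℤ) - (lds σ : ℤ)|
          ≤ |(lds (σ' * τs.prod) : ℤ) - (lds σ' : ℤ)| + |(lds σ' : ℤ) - (lds σ : ℤ)| :=
            abs_sub_le _ _ _
        _ ≤ 2 * c + 2 := by
            rw [← hσ'] at t1
            omega
        _ ≤ 2 * (c + 1 : ℕ) := by push_cast; omega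

end Main

theorem stmt_1 (n : ℕ) (hn : 1 ≤ n) (σ : Equiv.Perm (Fin n)) :
    ∃ τs : List (Equiv.Perm (Fin n)),
      τs.length = numCycles σ - 1 ∧
      (∀ τ ∈ τs, τ.IsSwap) ∧
      numCycles (σ * τs.prod) = 1 ∧
      |(lis (σ * τs.prod) : ℤ) - (lis σ : ℤ)| ≤ 2 * ((numCycles σ : ℤ) - 1) ∧
      |(lds (σ * τs.prod) : ℤ) - (lds σ : ℤ)| ≤ 2 * ((numCycles σ : ℤ) - 1) := by
  have h1 := one_le_numCycles hn σ
  obtain ⟨τs, hlen, hswaps, hone, hlis, hlds⟩ :=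
    main_aux (numCycles σ - 1) σ (by omega)
  have hcast : ((numCycles σ - 1 : ℕ) : ℤ) = (numCycles σ : ℤ) - 1 := by
    omega
  refine ⟨τs, hlen, hswaps, hone, ?_, ?_⟩
  · calc |(lis (σ * τs.prod) : ℤ) - (lis σ : ℤ)| ≤ 2 * ((numCycles σ - 1 : ℕ) : ℤ) := hlis
      _ = 2 * ((numCycles σ : ℤ) - 1) := by rw [hcast]
  · calc |(lds (σ * τs.prod) : ℤ) - (lds σ : ℤ)| ≤ 2 * ((numCycles σ - 1 : ℕ) : ℤ) := hlds
      _ = 2 * ((numCycles σ : ℤ) - 1) := by rw [hcast]
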